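/- There is an isomorphism of categories cΔ ≅ cΔ^op between the cyclic category and its opposite. -/

import Mathlib

open CategoryTheory

namespace CyclicOpCat

/-- Generators of the opposite cyclic category `cΔᵒᵖ`:
faces `d n i : [n+1] → [n]` (`i ≤ n+1`), degeneracies `s n i : [n] → [n+1]` (`i ≤ n`),
and the cyclic operator `t n : [n] → [n]`. -/
inductive Gen : ℕ → ℕ → Type
  | d (n i : ℕ) (h : i ≤ n + 1) : Gen (n + 1) n
  | s (n i : ℕ) (h : i ≤ n) : Gen n (n + 1)
  | t (n : ℕ) : Gen n n

instance : Quiver ℕ := ⟨Gen⟩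

abbrev PathCat := Paths ℕ

def pobj (n : ℕ) : PathCat := (Paths.of ℕ).obj n

def pd (n i : ℕ) (h : i ≤ n + 1) : pobj (n + 1) ⟶ pobj n := Quiver.Hom.toPath (Gen.d n i h)
def ps (n i : ℕ) (h : i ≤ n) : pobj n ⟶ pobj (n + 1) := Quiver.Hom.toPath (Gen.s n i h)
def pt (n : ℕ) : pobj n ⟶ pobj n := Quiver.Hom.toPath (Gen.t n)

def ptpow (n : ℕ) : ℕ → (pobj n ⟶ pobj n)
  | 0 => 𝟙 _
  | k + 1 => ptpow n k ≫ pt n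

/-- The defining relations of `cΔᵒᵖ` (composition is written left-to-right, so the
word `d_i d_j`, which applies `d_j` first, is `pd _ j _ ≫ pd _ i _`). -/
inductive Rel : ∀ {X Y : PathCat}, (X ⟶ Y) → (X ⟶ Y) → Prop
  | dd (n i j : ℕ) (hij : i < j) (hj : j ≤ n + 2) :
      Rel (pd (n + 1) j hj ≫ pd n i (by omega))
          (pd (n + 1) i (by omega) ≫ pd n (j - 1) (by omega))
  | ss (n i j : ℕ) (hij : i ≤ j) (hj : j ≤ n) :
      Rel (ps n j hj ≫ ps (n + 1) i (by omega))
          (ps n i (by omega) ≫ ps (n + 1) (j + 1) (by omega))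
  | ds_lt (n i j : ℕ) (hij : i < j) (hj : j ≤ n + 1) :
      Rel (ps (n + 1) j hj ≫ pd (n + 1) i (by omega))
          (pd n i (by omega) ≫ ps n (j - 1) (by omega))
  | ds_eq (n i j : ℕ) (hj : j ≤ n) (hi : i = j ∨ i = j + 1) :
      Rel (ps n j hj ≫ pd n i (by omega)) (𝟙 (pobj n))
  | ds_gt (n i j : ℕ) (hij : j + 1 < i) (hi : i ≤ n + 2) :
      Rel (ps (n + 1) j (by omega) ≫ pd (n + 1) i hi)
          (pd n (i - 1) (by omega) ≫ ps n j (by omega))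
  | tpow (n : ℕ) : Rel (ptpow n (n + 1)) (𝟙 (pobj n))
  | dt (n i : ℕ) (h1 : 1 ≤ i) (h2 : i ≤ n + 1) :
      Rel (pt (n + 1) ≫ pd n i h2) (pd n (i - 1) (by omega) ≫ pt n)
  | st (n i : ℕ) (h1 : 1 ≤ i) (h2 : i ≤ n) :
      Rel (pt n ≫ ps n i h2) (ps n (i - 1) (by omega) ≫ pt (n + 1))

/-- The opposite cyclic category `cΔᵒᵖ`, presented by generators and relations. -/
def relOp : HomRel PathCat := @fun _ _ f g => Rel f g

abbrev CycOp := CategoryTheory.Quotient relOp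

/-- The object `[n]` of `cΔᵒᵖ`. -/
def obj (n : ℕ) : CycOp := (Quotient.functor relOp).obj (pobj n)

/-- The face map `d_i : [n+1] → [n]`. -/
def d (n i : ℕ) (h : i ≤ n + 1) : obj (n + 1) ⟶ obj n := (Quotient.functor relOp).map (pd n i h)

/-- The degeneracy `s_i : [n] → [n+1]`. -/
def s (n i : ℕ) (h : i ≤ n) : obj n ⟶ obj (n + 1) := (Quotient.functor relOp).map (ps n i h)

/-- The cyclic operator `t : [n] → [n]`. -/
def t (n : ℕ) : obj n ⟶ obj n := (Quotient.functor relOp).map (pt n)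

/-- `t^k : [n] → [n]`. -/
def tpow (n k : ℕ) : obj n ⟶ obj n := (Quotient.functor relOp).map (ptpow n k)


/-! ### Basic lemmas -/

lemma eq_of_rel {X Y : PathCat} {f g : X ⟶ Y} (h : Rel f g) :
    (Quotient.functor relOp).map f = (Quotient.functor relOp).map g :=
  CategoryTheory.Quotient.sound relOp h

lemma d_irrel (n i : ℕ) (h h' : i ≤ n + 1) : d n i h = d n i h' := rfl
lemma s_irrel (n i : ℕ) (h h' : i ≤ n) : s n i h = s n i h' := rfl

-- R1
lemma rel_dd (n i j : ℕ) (hij : i < j) (hj : j ≤ n + 2) :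
    d (n + 1) j hj ≫ d n i (by omega) = d (n + 1) i (by omega) ≫ d n (j - 1) (by omega) := by
  have := eq_of_rel (Rel.dd n i j hij hj)
  simp only [Functor.map_comp] at this
  exact this

-- R2
lemma rel_ss (n i j : ℕ) (hij : i ≤ j) (hj : j ≤ n) :
    s n j hj ≫ s (n + 1) i (by omega) = s n i (by omega) ≫ s (n + 1) (j + 1) (by omega) := by
  have := eq_of_rel (Rel.ss n i j hij hj)
  simp only [Functor.map_comp] at this
  exact this

-- R3
lemma rel_ds_lt (n i j : ℕ) (hij : i < j) (hj : j ≤ n + 1) :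
    s (n + 1) j hj ≫ d (n + 1) i (by omega) = d n i (by omega) ≫ s n (j - 1) (by omega) := by
  have := eq_of_rel (Rel.ds_lt n i j hij hj)
  simp only [Functor.map_comp] at this
  exact this

-- R4
lemma rel_ds_eq (n i j : ℕ) (hj : j ≤ n) (hi : i = j ∨ i = j + 1) :
    s n j hj ≫ d n i (by omega) = 𝟙 (obj n) := by
  have := eq_of_rel (Rel.ds_eq n i j hj hi)
  simp only [Functor.map_comp, Functor.map_id] at this
  exact this

-- R5
lemma rel_ds_gt (n i j : ℕ) (hij : j + 1 < i) (hi : i ≤ n + 2) :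
    s (n + 1) j (by omega) ≫ d (n + 1) i hi = d n (i - 1) (by omega) ≫ s n j (by omega) := by
  have := eq_of_rel (Rel.ds_gt n i j hij hi)
  simp only [Functor.map_comp] at this
  exact this

-- R7
lemma rel_dt (n i : ℕ) (h1 : 1 ≤ i) (h2 : i ≤ n + 1) :
    t (n + 1) ≫ d n i h2 = d n (i - 1) (by omega) ≫ t n := by
  have := eq_of_rel (Rel.dt n i h1 h2)
  simp only [Functor.map_comp] at this
  exact this

-- R8
lemma rel_st (n i : ℕ) (h1 : 1 ≤ i) (h2 : i ≤ n) :
    t n ≫ s n i h2 = s n (i - 1) (by omega) ≫ t (n + 1) := by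
  have := eq_of_rel (Rel.st n i h1 h2)
  simp only [Functor.map_comp] at this
  exact this

/-! ### tpow lemmas -/

lemma tpow_zero (n : ℕ) : tpow n 0 = 𝟙 (obj n) :=
  (Quotient.functor relOp).map_id _

lemma d_congr (n : ℕ) {i j : ℕ} (e : i = j) (h : i ≤ n + 1) : d n i h = d n j (e ▸ h) := by
  subst e; rfl

lemma s_congr (n : ℕ) {i j : ℕ} (e : i = j) (h : i ≤ n) : s n i h = s n j (e ▸ h) := by
  subst e; rfl

lemma tpow_succ (n k : ℕ) : tpow n (k + 1) = tpow n k ≫ t n := by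
  simp only [tpow, t, ptpow, Functor.map_comp]; rfl

lemma tpow_one (n : ℕ) : tpow n 1 = t n := by
  rw [tpow_succ, tpow_zero, Category.id_comp]

lemma tpow_add (n a b : ℕ) : tpow n (a + b) = tpow n a ≫ tpow n b := by
  induction b with
  | zero => simp [tpow_zero]
  | succ b ih => rw [← Nat.add_assoc, tpow_succ, ih, tpow_succ, Category.assoc]

lemma tpow_cycle (n : ℕ) : tpow n (n + 1) = 𝟙 (obj n) := by
  exact (eq_of_rel (Rel.tpow n)).trans ((Quotient.functor relOp).map_id _)

lemma t_comp_tpow_n (n : ℕ) : t n ≫ tpow n n = 𝟙 (obj n) := by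
  rw [← tpow_one, ← tpow_add, Nat.add_comm, tpow_cycle]

lemma tpow_n_comp_t (n : ℕ) : tpow n n ≫ t n = 𝟙 (obj n) := by
  rw [← tpow_succ, tpow_cycle]

lemma tpow_period (n a : ℕ) : tpow n (a + (n + 1)) = tpow n a := by
  rw [tpow_add, tpow_cycle, Category.comp_id]

lemma tpow_mod (n a : ℕ) : tpow n a = tpow n (a % (n + 1)) := by
  induction a using Nat.strong_induction_on with
  | _ a ih =>
    by_cases h : a < n + 1
    · rw [Nat.mod_eq_of_lt h]
    · have h1 : a = (a - (n + 1)) + (n + 1) := by omega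
      rw [h1, tpow_period, ih _ (by omega), Nat.add_mod_right]

lemma tpow_mul_cycle (n k : ℕ) : tpow n (k * (n + 1)) = 𝟙 (obj n) := by
  rw [tpow_mod, Nat.mul_mod_left, tpow_zero]

/-! ### derived lemmas -/

lemma tpow_comp_d (n : ℕ) : ∀ (k i : ℕ), k ≤ i → ∀ (hi : i ≤ n + 1),
    tpow (n + 1) k ≫ d n i hi = d n (i - k) (by omega) ≫ tpow n k := by
  intro k
  induction k with
  | zero => intro i hk hi; rw [tpow_zero, tpow_zero, Category.id_comp, Category.comp_id]; exact d_congr _ (by omega) _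
  | succ k ih =>
    intro i hk hi
    rw [tpow_succ, Category.assoc, rel_dt n i (by omega) hi, ← Category.assoc,
      ih (i - 1) (by omega) (by omega), Category.assoc, ← tpow_succ,
      d_congr n (show i - 1 - k = i - (k + 1) by omega)]

lemma tpow_comp_s (n : ℕ) : ∀ (k i : ℕ), k ≤ i → ∀ (hi : i ≤ n),
    tpow n k ≫ s n i hi = s n (i - k) (by omega) ≫ tpow (n + 1) k := by
  intro k
  induction k with
  | zero => intro i hk hi; rw [tpow_zero, tpow_zero, Category.id_comp, Category.comp_id]; exact s_congr _ (by omega) _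
  | succ k ih =>
    intro i hk hi
    rw [tpow_succ, Category.assoc, rel_st n i (by omega) hi, ← Category.assoc,
      ih (i - 1) (by omega) (by omega), Category.assoc, ← tpow_succ,
      s_congr n (show i - 1 - k = i - (k + 1) by omega)]

lemma t_comp_tpow (n k : ℕ) : t n ≫ tpow n k = tpow n (k + 1) := by
  rw [← tpow_one, ← tpow_add, Nat.add_comm]

lemma tpow_nsq (n : ℕ) : tpow n (n * n) = t n := by
  have h : tpow n (n * n) ≫ tpow n n = 𝟙 (obj n) := by
    rw [← tpow_add, ← Nat.mul_succ, tpow_mul_cycle]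
  calc tpow n (n * n) = tpow n (n * n) ≫ (tpow n n ≫ t n) := by
        rw [tpow_n_comp_t, Category.comp_id]
    _ = (tpow n (n * n) ≫ tpow n n) ≫ t n := by rw [Category.assoc]
    _ = t n := by rw [h, Category.id_comp]

lemma e_d_top (n : ℕ) : tpow (n + 1) (n + 1) ≫ d n (n + 1) (le_refl (n + 1)) = d n 0 (by omega) := by
  rw [tpow_comp_d n (n + 1) (n + 1) le_rfl, tpow_cycle, Category.comp_id,
    d_congr n (show n + 1 - (n + 1) = 0 by omega)]

lemma t_d0 (n : ℕ) (h : 0 ≤ n + 1) : t (n + 1) ≫ d n 0 h = d n (n + 1) (le_refl (n + 1)) := by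
  rw [← e_d_top, ← Category.assoc, t_comp_tpow, tpow_cycle, Category.id_comp]

lemma s0_eq (n : ℕ) (h : 0 ≤ n) :
    s n 0 h = tpow n n ≫ s n n (le_refl n) ≫ tpow (n + 1) 2 := by
  have h1 : tpow n n ≫ s n n (le_refl n) = s n 0 h ≫ tpow (n + 1) n := by
    rw [tpow_comp_s n n n le_rfl, s_congr n (show n - n = 0 by omega)]
  rw [← Category.assoc, h1, Category.assoc, ← tpow_add,
    show n + 2 = n + 1 + 1 by omega, tpow_cycle, Category.comp_id]

lemma t_s0 (n : ℕ) (h : 0 ≤ n) :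
    t n ≫ s n 0 h = s n n (le_refl n) ≫ tpow (n + 1) 2 := by
  rw [s0_eq n h, ← Category.assoc, t_comp_tpow, tpow_cycle, Category.id_comp]

lemma s_comp_e (n i : ℕ) (h1 : 1 ≤ i) (h2 : i ≤ n) :
    s n i h2 ≫ tpow (n + 1) (n + 1) = tpow n n ≫ s n (i - 1) (by omega) := by
  calc s n i h2 ≫ tpow (n + 1) (n + 1)
      = (tpow n n ≫ t n) ≫ s n i h2 ≫ tpow (n + 1) (n + 1) := by
        rw [tpow_n_comp_t, Category.id_comp]
    _ = tpow n n ≫ (t n ≫ s n i h2) ≫ tpow (n + 1) (n + 1) := by simp only [Category.assoc]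
    _ = tpow n n ≫ (s n (i - 1) (by omega) ≫ t (n + 1)) ≫ tpow (n + 1) (n + 1) := by
        rw [rel_st n i h1 h2]
    _ = tpow n n ≫ s n (i - 1) (by omega) := by
        rw [Category.assoc, t_comp_tpow, tpow_cycle, Category.comp_id]

lemma d_comp_e (n i : ℕ) (h1 : 1 ≤ i) (h2 : i ≤ n + 1) :
    d n i h2 ≫ tpow n n = tpow (n + 1) (n + 1) ≫ d n (i - 1) (by omega) := by
  calc d n i h2 ≫ tpow n n
      = (tpow (n + 1) (n + 1) ≫ t (n + 1)) ≫ d n i h2 ≫ tpow n n := by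
        rw [tpow_n_comp_t, Category.id_comp]
    _ = tpow (n + 1) (n + 1) ≫ (t (n + 1) ≫ d n i h2) ≫ tpow n n := by
        simp only [Category.assoc]
    _ = tpow (n + 1) (n + 1) ≫ (d n (i - 1) (by omega) ≫ t n) ≫ tpow n n := by
        rw [rel_dt n i h1 h2]
    _ = tpow (n + 1) (n + 1) ≫ d n (i - 1) (by omega) := by
        rw [Category.assoc, t_comp_tpow, tpow_cycle, Category.comp_id]

lemma e_comp_d (n i : ℕ) (h : i ≤ n) :
    tpow (n + 1) (n + 1) ≫ d n i (by omega) = d n (i + 1) (by omega) ≫ tpow n n := by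
  rw [d_comp_e n (i + 1) (by omega) (by omega), d_congr n (show i + 1 - 1 = i by omega)]

lemma e_comp_s (n i : ℕ) (h : i ≤ n - 1) (hn : 1 ≤ n) :
    tpow n n ≫ s n i (by omega) = s n (i + 1) (by omega) ≫ tpow (n + 1) (n + 1) := by
  rw [s_comp_e n (i + 1) (by omega) (by omega), s_congr n (show i + 1 - 1 = i by omega)]

lemma tpow_congr (n : ℕ) {a b : ℕ} (e : a = b) : tpow n a = tpow n b := by subst e; rfl

lemma tpow_two (n : ℕ) : tpow n 2 = t n ≫ t n := by
  rw [show (2:ℕ) = 1 + 1 from rfl, tpow_succ, tpow_one]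

lemma key_dd01 (n : ℕ) :
    (s n n le_rfl ≫ t (n+1)) ≫ s (n+1) 0 (Nat.zero_le _) =
    (s n n le_rfl ≫ t (n+1)) ≫ (s (n+1) (n+1) le_rfl ≫ t (n+2)) := by
  have e1 : t (n+1) ≫ s (n+1) 0 (Nat.zero_le _) =
      s (n+1) (n+1) le_rfl ≫ tpow (n+2) 2 := t_s0 (n+1) (Nat.zero_le _)
  have e2 : t (n+1) ≫ s (n+1) (n+1) le_rfl = s (n+1) n (by omega) ≫ t (n+2) :=
    rel_st (n+1) (n+1) (by omega) le_rfl
  have e3 : s n n le_rfl ≫ s (n+1) n (by omega) = s n n le_rfl ≫ s (n+1) (n+1) le_rfl :=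
    rel_ss n n n le_rfl le_rfl
  calc (s n n le_rfl ≫ t (n+1)) ≫ s (n+1) 0 (Nat.zero_le _)
      = s n n le_rfl ≫ (t (n+1) ≫ s (n+1) 0 (Nat.zero_le _)) := by rw [Category.assoc]
    _ = s n n le_rfl ≫ s (n+1) (n+1) le_rfl ≫ tpow (n+2) 2 := by rw [e1]
    _ = (s n n le_rfl ≫ s (n+1) n (by omega)) ≫ tpow (n+2) 2 := by
        rw [e3, Category.assoc]
    _ = s n n le_rfl ≫ (s (n+1) n (by omega) ≫ t (n+2)) ≫ t (n+2) := by
        rw [tpow_two]; try simp only [Category.assoc]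
    _ = s n n le_rfl ≫ (t (n+1) ≫ s (n+1) (n+1) le_rfl) ≫ t (n+2) := by rw [e2]
    _ = (s n n le_rfl ≫ t (n+1)) ≫ (s (n+1) (n+1) le_rfl ≫ t (n+2)) := by
        simp only [Category.assoc]

lemma key_dd0 (n j : ℕ) (hj : j ≤ n) :
    (s n n le_rfl ≫ t (n+1)) ≫ s (n+1) (j+1) (by omega) =
    s n j hj ≫ (s (n+1) (n+1) le_rfl ≫ t (n+2)) := by
  have e1 : t (n+1) ≫ s (n+1) (j+1) (by omega) = s (n+1) j (by omega) ≫ t (n+2) :=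
    rel_st (n+1) (j+1) (by omega) (by omega)
  have e2 : s n n le_rfl ≫ s (n+1) j (by omega) = s n j hj ≫ s (n+1) (n+1) le_rfl :=
    rel_ss n j n hj le_rfl
  calc (s n n le_rfl ≫ t (n+1)) ≫ s (n+1) (j+1) (by omega)
      = s n n le_rfl ≫ (t (n+1) ≫ s (n+1) (j+1) (by omega)) := by rw [Category.assoc]
    _ = (s n n le_rfl ≫ s (n+1) j (by omega)) ≫ t (n+2) := by rw [e1, Category.assoc]
    _ = (s n j hj ≫ s (n+1) (n+1) le_rfl) ≫ t (n+2) := by rw [e2]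
    _ = s n j hj ≫ (s (n+1) (n+1) le_rfl ≫ t (n+2)) := by rw [Category.assoc]

lemma key_dslt0 (n j : ℕ) (hj : j ≤ n) :
    (s (n+1) (n+1) le_rfl ≫ t (n+2)) ≫ d (n+1) (j+1) (by omega) =
    d n j (by omega) ≫ (s n n le_rfl ≫ t (n+1)) := by
  have e1 : t (n+2) ≫ d (n+1) (j+1) (by omega) = d (n+1) j (by omega) ≫ t (n+1) :=
    rel_dt (n+1) (j+1) (by omega) (by omega)
  have e2 : s (n+1) (n+1) le_rfl ≫ d (n+1) j (by omega) = d n j (by omega) ≫ s n n le_rfl :=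
    rel_ds_lt n j (n+1) (by omega) le_rfl
  calc (s (n+1) (n+1) le_rfl ≫ t (n+2)) ≫ d (n+1) (j+1) (by omega)
      = s (n+1) (n+1) le_rfl ≫ (t (n+2) ≫ d (n+1) (j+1) (by omega)) := by rw [Category.assoc]
    _ = (s (n+1) (n+1) le_rfl ≫ d (n+1) j (by omega)) ≫ t (n+1) := by rw [e1, Category.assoc]
    _ = (d n j (by omega) ≫ s n n le_rfl) ≫ t (n+1) := by rw [e2]
    _ = d n j (by omega) ≫ (s n n le_rfl ≫ t (n+1)) := by rw [Category.assoc]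

lemma key_dseq0 (n : ℕ) :
    (s n n le_rfl ≫ t (n+1)) ≫ d n 0 (Nat.zero_le _) = 𝟙 (obj n) := by
  rw [Category.assoc, t_d0 n (Nat.zero_le _)]
  exact rel_ds_eq n (n+1) n le_rfl (Or.inr rfl)

/-! ### The duality prefunctor Ψ -/

def psiGen : ∀ {a b : ℕ}, Gen a b → (obj b ⟶ obj a)
  | _, _, Gen.d n 0 _ => s n n (le_refl n) ≫ t (n + 1)
  | _, _, Gen.d n (i+1) h => s n i (by omega)
  | _, _, Gen.s n i h => d n i (by omega)
  | _, _, Gen.t n => tpow n n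

def FPre : ℕ ⥤q CycOpᵒᵖ where
  obj n := Opposite.op (obj n)
  map g := (psiGen g).op

lemma FPre_map {a b : ℕ} (g : Gen a b) : FPre.map g = (psiGen g).op := rfl

def Fp : PathCat ⥤ CycOpᵒᵖ := Paths.lift FPre

lemma Fp_gen {a b : ℕ} (g : Gen a b) :
    Fp.map (Quiver.Hom.toPath g) = (psiGen g).op := by
  simp [Fp, FPre_map]; rfl

lemma Fp_pd (n i : ℕ) (h : i ≤ n + 1) : Fp.map (pd n i h) = (psiGen (Gen.d n i h)).op := Fp_gen _
lemma Fp_ps (n i : ℕ) (h : i ≤ n) : Fp.map (ps n i h) = (psiGen (Gen.s n i h)).op := Fp_gen _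
lemma Fp_pt (n : ℕ) : Fp.map (pt n) = (psiGen (Gen.t n)).op := Fp_gen _
lemma Fp_obj (n : ℕ) : Fp.obj (pobj n) = Opposite.op (obj n) := rfl

lemma Fp_ptpow (n k : ℕ) : Fp.map (ptpow n k) = (tpow n (n * k)).op := by
  induction k with
  | zero =>
    show Fp.map (𝟙 (pobj n)) = _
    rw [Fp.map_id, Nat.mul_zero, tpow_zero]
    rfl
  | succ k ih =>
    show Fp.map (ptpow n k ≫ pt n) = _
    rw [Functor.map_comp, Fp_pt, ih]
    show _ = (tpow n (n * (k+1))).op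
    erw [← op_comp]
    congr 1
    show tpow n n ≫ tpow n (n * k) = _
    rw [← tpow_add, tpow_congr n (show n + n * k = n * (k + 1) by ring)]

theorem Fp_rel {X Y : PathCat} (f g : X ⟶ Y) (h : relOp f g) : Fp.map f = Fp.map g := by
  cases h with
  | dd n i j hij hj =>
    simp only [Functor.map_comp, Fp_pd, Fp_obj, ← op_comp]
    congr 1
    match i, j, hij, hj with
    | i+1, j+2, hij, hj =>
      show s n i _ ≫ s (n+1) (j+1) _ = s n j _ ≫ s (n+1) i _
      exact (rel_ss n i j (by omega) (by omega)).symm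
    | 0, 1, hij, hj =>
      exact key_dd01 n
    | 0, j+2, hij, hj =>
      exact key_dd0 n j (by omega)
  | ss n i j hij hj =>
    simp only [Functor.map_comp, Fp_ps, Fp_obj, ← op_comp]
    congr 1
    show d (n+1) i _ ≫ d n j _ = d (n+1) (j+1) _ ≫ d n i _
    exact (rel_dd n i (j+1) (by omega) (by omega)).symm
  | ds_lt n i j hij hj =>
    simp only [Functor.map_comp, Fp_ps, Fp_pd, Fp_obj, ← op_comp]
    congr 1
    match i, hij with
    | i+1, hij =>
      show s (n+1) i _ ≫ d (n+1) j _ = d n (j-1) _ ≫ s n i _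
      exact rel_ds_gt n j i hij (by omega)
    | 0, hij =>
      match j, hij, hj with
      | j+1, hij, hj =>
        exact key_dslt0 n j (by omega)
  | ds_eq n i j hj hi =>
    simp only [Functor.map_comp, Fp_ps, Fp_pd, Fp_obj, ← op_comp]
    rw [Fp.map_id]
    show (psiGen (Gen.d n i (by omega)) ≫ psiGen (Gen.s n j hj)).op = (𝟙 (obj n)).op
    congr 1
    rcases hi with rfl | rfl
    · match i, hj with
      | j+1, hj =>
        show s n j _ ≫ d n (j+1) _ = 𝟙 (obj n)
        exact rel_ds_eq n (j+1) j (by omega) (Or.inr rfl)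
      | 0, hj =>
        exact key_dseq0 n
    · show s n j _ ≫ d n j _ = 𝟙 (obj n)
      exact rel_ds_eq n j j hj (Or.inl rfl)
  | ds_gt n i j hij hi =>
    simp only [Functor.map_comp, Fp_ps, Fp_pd, Fp_obj, ← op_comp]
    congr 1
    match i, hij, hi with
    | i+2, hij, hi =>
      show s (n+1) (i+1) _ ≫ d (n+1) j _ = d n j _ ≫ s n i _
      exact rel_ds_lt n j (i+1) (by omega) (by omega)
  | tpow n =>
    rw [Fp_ptpow, tpow_mul_cycle, Fp.map_id]
    rfl
  | dt n i h1 h2 =>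
    simp only [Functor.map_comp, Fp_pd, Fp_pt, Fp_obj, ← op_comp]
    congr 1
    match i, h1, h2 with
    | i+2, h1, h2 =>
      show s n (i+1) _ ≫ tpow (n+1) (n+1) = tpow n n ≫ s n i _
      rw [s_comp_e n (i+1) (by omega) (by omega),
        s_congr n (show i + 1 - 1 = i by omega)]
    | 1, h1, h2 =>
      show s n 0 _ ≫ tpow (n+1) (n+1) = tpow n n ≫ (s n n _ ≫ t (n+1))
      rw [s0_eq n (by omega), Category.assoc, Category.assoc, ← tpow_add,
        tpow_congr (n+1) (show 2 + (n+1) = 1 + (n+1+1) by omega), tpow_period, tpow_one]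
  | st n i h1 h2 =>
    simp only [Functor.map_comp, Fp_ps, Fp_pt, Fp_obj, ← op_comp]
    congr 1
    show d n i _ ≫ tpow n n = tpow (n+1) (n+1) ≫ d n (i-1) _
    exact d_comp_e n i h1 (by omega)

def F : CycOp ⥤ CycOpᵒᵖ :=
  CategoryTheory.Quotient.lift relOp Fp (fun _ _ f g h => Fp_rel f g h)

/-! ### The inverse duality prefunctor Ψ' -/

def psi'Gen : ∀ {a b : ℕ}, Gen a b → (obj b ⟶ obj a)
  | _, _, Gen.d n i _ =>
      if h' : i ≤ n then s n i h' else tpow n n ≫ s n n (le_refl n) ≫ t (n + 1)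
  | _, _, Gen.s n i h => d n (i + 1) (by omega)
  | _, _, Gen.t n => tpow n n

lemma psi'_d_le (n i : ℕ) (h : i ≤ n + 1) (h' : i ≤ n) :
    psi'Gen (Gen.d n i h) = s n i h' := dif_pos h'

lemma psi'_d_top (n : ℕ) (h : n + 1 ≤ n + 1) :
    psi'Gen (Gen.d n (n + 1) h) = tpow n n ≫ s n n (le_refl n) ≫ t (n + 1) :=
  dif_neg (by omega)

lemma psi'_s (n i : ℕ) (h : i ≤ n) : psi'Gen (Gen.s n i h) = d n (i + 1) (by omega) := rfl

lemma psi'_t (n : ℕ) : psi'Gen (Gen.t n) = tpow n n := rfl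

lemma tpow2_e (n : ℕ) : tpow (n+1) 2 ≫ tpow (n+1) (n+1) = t (n+1) := by
  rw [← tpow_add, tpow_congr (n+1) (show 2 + (n+1) = 1 + (n+1+1) by omega),
    tpow_period, tpow_one]

lemma key'_dd1 (n i : ℕ) (h : i + 1 ≤ n) :
    s n (i+1) h ≫ (tpow (n+1) (n+1) ≫ s (n+1) (n+1) le_rfl ≫ t (n+2)) =
    (tpow n n ≫ s n n le_rfl ≫ t (n+1)) ≫ s (n+1) (i+1) (by omega) := by
  have e1 : s n (i+1) h ≫ tpow (n+1) (n+1) = tpow n n ≫ s n i (by omega) :=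
    s_comp_e n (i+1) (by omega) h
  have e2 : t (n+1) ≫ s (n+1) (i+1) (by omega) = s (n+1) i (by omega) ≫ t (n+2) :=
    rel_st (n+1) (i+1) (by omega) (by omega)
  have e3 : s n n le_rfl ≫ s (n+1) i (by omega) = s n i (by omega) ≫ s (n+1) (n+1) le_rfl :=
    rel_ss n i n (by omega) le_rfl
  calc s n (i+1) h ≫ (tpow (n+1) (n+1) ≫ s (n+1) (n+1) le_rfl ≫ t (n+2))
      = (s n (i+1) h ≫ tpow (n+1) (n+1)) ≫ s (n+1) (n+1) le_rfl ≫ t (n+2) := by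
        simp only [Category.assoc]
    _ = tpow n n ≫ (s n i (by omega) ≫ s (n+1) (n+1) le_rfl) ≫ t (n+2) := by
        rw [e1]; try simp only [Category.assoc]
    _ = tpow n n ≫ (s n n le_rfl ≫ s (n+1) i (by omega)) ≫ t (n+2) := by rw [e3]
    _ = tpow n n ≫ s n n le_rfl ≫ (s (n+1) i (by omega) ≫ t (n+2)) := by
        simp only [Category.assoc]
    _ = tpow n n ≫ s n n le_rfl ≫ (t (n+1) ≫ s (n+1) (i+1) (by omega)) := by rw [e2]
    _ = (tpow n n ≫ s n n le_rfl ≫ t (n+1)) ≫ s (n+1) (i+1) (by omega) := by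
        simp only [Category.assoc]

lemma key'_dd0 (n : ℕ) :
    s n 0 (Nat.zero_le n) ≫ (tpow (n+1) (n+1) ≫ s (n+1) (n+1) le_rfl ≫ t (n+2)) =
    (tpow n n ≫ s n n le_rfl ≫ t (n+1)) ≫ s (n+1) 0 (Nat.zero_le _) := by
  have e0 : s n 0 (Nat.zero_le n) = tpow n n ≫ s n n le_rfl ≫ tpow (n+1) 2 :=
    s0_eq n (Nat.zero_le n)
  have e1 : t (n+1) ≫ s (n+1) (n+1) le_rfl = s (n+1) n (by omega) ≫ t (n+2) :=
    rel_st (n+1) (n+1) (by omega) le_rfl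
  have e2 : s n n le_rfl ≫ s (n+1) n (by omega) = s n n le_rfl ≫ s (n+1) (n+1) le_rfl :=
    rel_ss n n n le_rfl le_rfl
  have e3 : t (n+1) ≫ s (n+1) 0 (Nat.zero_le _) = s (n+1) (n+1) le_rfl ≫ tpow (n+2) 2 :=
    t_s0 (n+1) (Nat.zero_le _)
  calc s n 0 (Nat.zero_le n) ≫ (tpow (n+1) (n+1) ≫ s (n+1) (n+1) le_rfl ≫ t (n+2))
      = tpow n n ≫ s n n le_rfl ≫ (tpow (n+1) 2 ≫ tpow (n+1) (n+1)) ≫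
          s (n+1) (n+1) le_rfl ≫ t (n+2) := by rw [e0]; try simp only [Category.assoc]
    _ = tpow n n ≫ s n n le_rfl ≫ (t (n+1) ≫ s (n+1) (n+1) le_rfl) ≫ t (n+2) := by
        rw [tpow2_e]; try simp only [Category.assoc]
    _ = tpow n n ≫ (s n n le_rfl ≫ s (n+1) n (by omega)) ≫ t (n+2) ≫ t (n+2) := by
        rw [e1]; try simp only [Category.assoc]
    _ = tpow n n ≫ (s n n le_rfl ≫ s (n+1) (n+1) le_rfl) ≫ tpow (n+2) 2 := by
        rw [e2, tpow_two]; try simp only [Category.assoc]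
    _ = tpow n n ≫ s n n le_rfl ≫ (t (n+1) ≫ s (n+1) 0 (Nat.zero_le _)) := by
        rw [e3]; try simp only [Category.assoc]
    _ = (tpow n n ≫ s n n le_rfl ≫ t (n+1)) ≫ s (n+1) 0 (Nat.zero_le _) := by
        simp only [Category.assoc]

lemma key'_ddtop (n : ℕ) :
    (tpow n n ≫ s n n le_rfl ≫ t (n+1)) ≫
      (tpow (n+1) (n+1) ≫ s (n+1) (n+1) le_rfl ≫ t (n+2)) =
    (tpow n n ≫ s n n le_rfl ≫ t (n+1)) ≫ s (n+1) (n+1) le_rfl := by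
  have e0 : t (n+1) ≫ tpow (n+1) (n+1) = 𝟙 (obj (n+1)) := t_comp_tpow_n (n+1)
  have e1 : t (n+1) ≫ s (n+1) (n+1) le_rfl = s (n+1) n (by omega) ≫ t (n+2) :=
    rel_st (n+1) (n+1) (by omega) le_rfl
  have e2 : s n n le_rfl ≫ s (n+1) n (by omega) = s n n le_rfl ≫ s (n+1) (n+1) le_rfl :=
    rel_ss n n n le_rfl le_rfl
  calc (tpow n n ≫ s n n le_rfl ≫ t (n+1)) ≫
      (tpow (n+1) (n+1) ≫ s (n+1) (n+1) le_rfl ≫ t (n+2))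
      = tpow n n ≫ s n n le_rfl ≫ (t (n+1) ≫ tpow (n+1) (n+1)) ≫
          s (n+1) (n+1) le_rfl ≫ t (n+2) := by simp only [Category.assoc]
    _ = tpow n n ≫ (s n n le_rfl ≫ s (n+1) (n+1) le_rfl) ≫ t (n+2) := by
        rw [e0]; try simp only [Category.id_comp, Category.assoc]
    _ = tpow n n ≫ (s n n le_rfl ≫ s (n+1) n (by omega)) ≫ t (n+2) := by rw [e2]
    _ = tpow n n ≫ s n n le_rfl ≫ (t (n+1) ≫ s (n+1) (n+1) le_rfl) := by
        rw [e1]; try simp only [Category.assoc]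
    _ = (tpow n n ≫ s n n le_rfl ≫ t (n+1)) ≫ s (n+1) (n+1) le_rfl := by
        simp only [Category.assoc]

lemma key'_dseq_top (n : ℕ) :
    (tpow n n ≫ s n n le_rfl ≫ t (n+1)) ≫ d n (n+1) le_rfl = 𝟙 (obj n) := by
  have e1 : t (n+1) ≫ d n (n+1) le_rfl = d n n (by omega) ≫ t n :=
    rel_dt n (n+1) (by omega) le_rfl
  have e2 : s n n le_rfl ≫ d n n (by omega) = 𝟙 (obj n) :=
    rel_ds_eq n n n le_rfl (Or.inl rfl)
  calc (tpow n n ≫ s n n le_rfl ≫ t (n+1)) ≫ d n (n+1) le_rfl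
      = tpow n n ≫ (s n n le_rfl ≫ d n n (by omega)) ≫ t n := by
        simp only [Category.assoc]; rw [e1]
    _ = tpow n n ≫ t n := by rw [e2, Category.id_comp]
    _ = 𝟙 (obj n) := tpow_n_comp_t n

lemma key'_dsgt (n j : ℕ) (hj : j ≤ n) :
    (tpow (n+1) (n+1) ≫ s (n+1) (n+1) le_rfl ≫ t (n+2)) ≫ d (n+1) (j+1) (by omega) =
    d n (j+1) (by omega) ≫ (tpow n n ≫ s n n le_rfl ≫ t (n+1)) := by
  have e1 : t (n+2) ≫ d (n+1) (j+1) (by omega) = d (n+1) j (by omega) ≫ t (n+1) :=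
    rel_dt (n+1) (j+1) (by omega) (by omega)
  have e2 : s (n+1) (n+1) le_rfl ≫ d (n+1) j (by omega) = d n j (by omega) ≫ s n n le_rfl :=
    rel_ds_lt n j (n+1) (by omega) le_rfl
  have e3 : tpow (n+1) (n+1) ≫ d n j (by omega) = d n (j+1) (by omega) ≫ tpow n n :=
    e_comp_d n j hj
  calc (tpow (n+1) (n+1) ≫ s (n+1) (n+1) le_rfl ≫ t (n+2)) ≫ d (n+1) (j+1) (by omega)
      = tpow (n+1) (n+1) ≫ (s (n+1) (n+1) le_rfl ≫ d (n+1) j (by omega)) ≫ t (n+1) := by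
        simp only [Category.assoc]; rw [e1]
    _ = (tpow (n+1) (n+1) ≫ d n j (by omega)) ≫ s n n le_rfl ≫ t (n+1) := by
        rw [e2]; try simp only [Category.assoc]
    _ = d n (j+1) (by omega) ≫ (tpow n n ≫ s n n le_rfl ≫ t (n+1)) := by
        rw [e3]; try simp only [Category.assoc]

lemma key'_dt_top (n : ℕ) :
    (tpow n n ≫ s n n le_rfl ≫ t (n+1)) ≫ tpow (n+1) (n+1) = tpow n n ≫ s n n le_rfl := by
  have e0 : t (n+1) ≫ tpow (n+1) (n+1) = 𝟙 (obj (n+1)) := t_comp_tpow_n (n+1)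
  calc (tpow n n ≫ s n n le_rfl ≫ t (n+1)) ≫ tpow (n+1) (n+1)
      = tpow n n ≫ s n n le_rfl ≫ (t (n+1) ≫ tpow (n+1) (n+1)) := by
        simp only [Category.assoc]
    _ = tpow n n ≫ s n n le_rfl := by rw [e0, Category.comp_id]

def GPre : ℕ ⥤q CycOpᵒᵖ where
  obj n := Opposite.op (obj n)
  map g := (psi'Gen g).op

lemma GPre_map {a b : ℕ} (g : Gen a b) : GPre.map g = (psi'Gen g).op := rfl

def Gp : PathCat ⥤ CycOpᵒᵖ := Paths.lift GPre

lemma Gp_gen {a b : ℕ} (g : Gen a b) :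
    Gp.map (Quiver.Hom.toPath g) = (psi'Gen g).op := by
  simp [Gp, GPre_map]; rfl

lemma Gp_pd (n i : ℕ) (h : i ≤ n + 1) : Gp.map (pd n i h) = (psi'Gen (Gen.d n i h)).op := Gp_gen _
lemma Gp_ps (n i : ℕ) (h : i ≤ n) : Gp.map (ps n i h) = (psi'Gen (Gen.s n i h)).op := Gp_gen _
lemma Gp_pt (n : ℕ) : Gp.map (pt n) = (psi'Gen (Gen.t n)).op := Gp_gen _
lemma Gp_obj (n : ℕ) : Gp.obj (pobj n) = Opposite.op (obj n) := rfl

lemma Gp_ptpow (n k : ℕ) : Gp.map (ptpow n k) = (tpow n (n * k)).op := by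
  induction k with
  | zero =>
    show Gp.map (𝟙 (pobj n)) = _
    rw [Gp.map_id, Nat.mul_zero, tpow_zero]
    rfl
  | succ k ih =>
    show Gp.map (ptpow n k ≫ pt n) = _
    rw [Functor.map_comp, Gp_pt, ih]
    show _ = (tpow n (n * (k+1))).op
    erw [← op_comp]
    congr 1
    show tpow n n ≫ tpow n (n * k) = _
    rw [← tpow_add, tpow_congr n (show n + n * k = n * (k + 1) by ring)]

theorem Gp_rel {X Y : PathCat} (f g : X ⟶ Y) (h : relOp f g) : Gp.map f = Gp.map g := by
  cases h with
  | dd n i j hij hj =>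
    simp only [Functor.map_comp, Gp_pd, Gp_obj, ← op_comp]
    congr 1
    rcases Nat.lt_or_ge j (n+2) with hj2 | hj2
    · match j, hij, hj, hj2 with
      | j+1, hij, hj, hj2 =>
        show psi'Gen (Gen.d n i (by omega)) ≫ psi'Gen (Gen.d (n+1) (j+1) (by omega)) =
          psi'Gen (Gen.d n j (by omega)) ≫ psi'Gen (Gen.d (n+1) i (by omega))
        rw [psi'_d_le n i _ (by omega), psi'_d_le (n+1) (j+1) _ (by omega),
          psi'_d_le n j _ (by omega), psi'_d_le (n+1) i _ (by omega)]
        exact (rel_ss n i j (by omega) (by omega)).symm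
    · have hj3 : j = n + 2 := by omega
      subst hj3
      show psi'Gen (Gen.d n i (by omega)) ≫ psi'Gen (Gen.d (n+1) (n+1+1) (by omega)) =
        psi'Gen (Gen.d n (n+1) (by omega)) ≫ psi'Gen (Gen.d (n+1) i (by omega))
      rw [psi'_d_top (n+1) le_rfl, psi'_d_top n le_rfl]
      rcases Nat.lt_or_ge n i with hi4 | hi4
      · have hi5 : i = n + 1 := by omega
        subst hi5
        rw [psi'_d_top n le_rfl, psi'_d_le (n+1) (n+1) _ le_rfl]
        exact key'_ddtop n
      · rw [psi'_d_le n i _ hi4, psi'_d_le (n+1) i _ (by omega)]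
        match i, hi4 with
        | 0, _ => exact key'_dd0 n
        | i+1, hi4 => exact key'_dd1 n i hi4
  | ss n i j hij hj =>
    simp only [Functor.map_comp, Gp_ps, Gp_obj, ← op_comp]
    congr 1
    show d (n+1) (i+1) _ ≫ d n (j+1) _ = d (n+1) (j+1+1) _ ≫ d n (i+1) _
    exact (rel_dd n (i+1) (j+2) (by omega) (by omega)).symm
  | ds_lt n i j hij hj =>
    simp only [Functor.map_comp, Gp_ps, Gp_pd, Gp_obj, ← op_comp]
    congr 1
    match j, hij, hj with
    | j+1, hij, hj =>
      show psi'Gen (Gen.d (n+1) i (by omega)) ≫ d (n+1) (j+1+1) (by omega) =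
        d n (j+1) (by omega) ≫ psi'Gen (Gen.d n i (by omega))
      rw [psi'_d_le (n+1) i _ (by omega), psi'_d_le n i _ (by omega)]
      exact rel_ds_gt n (j+2) i (by omega) (by omega)
  | ds_eq n i j hj hi =>
    simp only [Functor.map_comp, Gp_ps, Gp_pd, Gp_obj, ← op_comp]
    rw [Gp.map_id]
    show (psi'Gen (Gen.d n i (by omega)) ≫ d n (j+1) (by omega)).op = (𝟙 (obj n)).op
    congr 1
    rcases hi with rfl | rfl
    · rw [psi'_d_le n i _ hj]
      exact rel_ds_eq n (i+1) i (by omega) (Or.inr rfl)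
    · rcases Nat.lt_or_ge j n with h4 | h4
      · rw [psi'_d_le n (j+1) _ (by omega)]
        exact rel_ds_eq n (j+1) (j+1) (by omega) (Or.inl rfl)
      · obtain rfl : j = n := by omega
        rw [psi'_d_top j le_rfl]
        exact key'_dseq_top j
  | ds_gt n i j hij hi =>
    simp only [Functor.map_comp, Gp_ps, Gp_pd, Gp_obj, ← op_comp]
    congr 1
    show psi'Gen (Gen.d (n+1) i hi) ≫ d (n+1) (j+1) (by omega) =
      d n (j+1) (by omega) ≫ psi'Gen (Gen.d n (i-1) (by omega))
    rcases Nat.lt_or_ge (n+1) i with h4 | h4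
    · have hi5 : i = n + 2 := by omega
      subst hi5
      show psi'Gen (Gen.d (n+1) (n+1+1) hi) ≫ d (n+1) (j+1) (by omega) =
        d n (j+1) (by omega) ≫ psi'Gen (Gen.d n (n+1) (by omega))
      rw [psi'_d_top (n+1) le_rfl, psi'_d_top n le_rfl]
      exact key'_dsgt n j (by omega)
    · rw [psi'_d_le (n+1) i _ h4, psi'_d_le n (i-1) _ (by omega)]
      exact rel_ds_lt n (j+1) i (by omega) h4
  | tpow n =>
    rw [Gp_ptpow, tpow_mul_cycle, Gp.map_id]
    rfl
  | dt n i h1 h2 =>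
    simp only [Functor.map_comp, Gp_pd, Gp_pt, Gp_obj, ← op_comp]
    congr 1
    show psi'Gen (Gen.d n i h2) ≫ tpow (n+1) (n+1) =
      tpow n n ≫ psi'Gen (Gen.d n (i-1) (by omega))
    rcases Nat.lt_or_ge n i with h4 | h4
    · have hi5 : i = n + 1 := by omega
      subst hi5
      rw [psi'_d_top n le_rfl]
      show (tpow n n ≫ s n n le_rfl ≫ t (n+1)) ≫ tpow (n+1) (n+1) =
        tpow n n ≫ psi'Gen (Gen.d n n (by omega))
      rw [psi'_d_le n n _ le_rfl]
      exact key'_dt_top n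
    · rw [psi'_d_le n i _ h4, psi'_d_le n (i-1) _ (by omega)]
      exact s_comp_e n i h1 h4
  | st n i h1 h2 =>
    simp only [Functor.map_comp, Gp_ps, Gp_pt, Gp_obj, ← op_comp]
    congr 1
    match i, h1, h2 with
    | i+1, h1, h2 =>
      show d n (i+1+1) _ ≫ tpow n n = tpow (n+1) (n+1) ≫ d n (i+1) _
      exact (e_comp_d n (i+1) (by omega)).symm

def G0 : CycOp ⥤ CycOpᵒᵖ :=
  CategoryTheory.Quotient.lift relOp Gp (fun _ _ f g h => Gp_rel f g h)

def G : CycOpᵒᵖ ⥤ CycOp := G0.leftOp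

/-! ### The composites are the identity -/

lemma F_mapQ {X Y : PathCat} (p : X ⟶ Y) :
    F.map ((Quotient.functor relOp).map p) = Fp.map p :=
  CategoryTheory.Quotient.lift_map_functor_map relOp Fp (fun _ _ f g h => Fp_rel f g h) p

lemma G0_mapQ {X Y : PathCat} (p : X ⟶ Y) :
    G0.map ((Quotient.functor relOp).map p) = Gp.map p :=
  CategoryTheory.Quotient.lift_map_functor_map relOp Gp (fun _ _ f g h => Gp_rel f g h) p

lemma G0_s (n i : ℕ) (h : i ≤ n) : G0.map (s n i h) = (d n (i+1) (by omega)).op := by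
  exact (G0_mapQ _).trans (Gp_ps n i h)

lemma G0_d (n i : ℕ) (h : i ≤ n + 1) : G0.map (d n i h) = (psi'Gen (Gen.d n i h)).op := by
  exact (G0_mapQ _).trans (Gp_pd n i h)

lemma G0_t (n : ℕ) : G0.map (t n) = (tpow n n).op := by
  exact (G0_mapQ _).trans (Gp_pt n)

lemma G0_tpow (n k : ℕ) : G0.map (tpow n k) = (tpow n (n * k)).op := by
  exact (G0_mapQ _).trans (Gp_ptpow n k)

lemma F_s (n i : ℕ) (h : i ≤ n) : F.map (s n i h) = (d n i (by omega)).op := by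
  exact (F_mapQ _).trans (Fp_ps n i h)

lemma F_d (n i : ℕ) (h : i ≤ n + 1) : F.map (d n i h) = (psiGen (Gen.d n i h)).op := by
  exact (F_mapQ _).trans (Fp_pd n i h)

lemma F_t (n : ℕ) : F.map (t n) = (tpow n n).op := by
  exact (F_mapQ _).trans (Fp_pt n)

lemma F_tpow (n k : ℕ) : F.map (tpow n k) = (tpow n (n * k)).op := by
  exact (F_mapQ _).trans (Fp_ptpow n k)

lemma tpow_n_mul_n (n : ℕ) : tpow n (n * n) = t n := tpow_nsq n

lemma GF_t (n : ℕ) : G.map ((F.map (t n))) = t n := by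
  rw [F_t]
  show (G0.map (tpow n n)).unop = t n
  erw [G0_tpow, Quiver.Hom.unop_op, tpow_nsq]

lemma GF_s (n i : ℕ) (h : i ≤ n) : G.map (F.map (s n i h)) = s n i h := by
  rw [F_s]
  show (G0.map (d n i (by omega))).unop = s n i h
  erw [G0_d, Quiver.Hom.unop_op, psi'_d_le n i _ h]

lemma GF_d (n i : ℕ) (h : i ≤ n + 1) : G.map (F.map (d n i h)) = d n i h := by
  rw [F_d]
  match i, h with
  | 0, h =>
    show (G0.map (s n n le_rfl ≫ t (n+1))).unop = d n 0 h
    rw [Functor.map_comp, G0_s, G0_t]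
    show ((d n (n+1) (by omega)).op ≫ (tpow (n+1) (n+1)).op).unop = d n 0 h
    erw [← op_comp, Quiver.Hom.unop_op]
    exact e_d_top n
  | i+1, h =>
    show (G0.map (s n i (by omega))).unop = d n (i+1) h
    erw [G0_s, Quiver.Hom.unop_op]

lemma key_theta_top (n : ℕ) :
    tpow (n+1) (n+1) ≫ d n n (by omega) ≫ tpow n (n * n) = d n (n+1) le_rfl := by
  rw [← Category.assoc, e_comp_d n n le_rfl, Category.assoc, ← tpow_add,
    tpow_congr n (show n + n * n = n * (n+1) by ring), tpow_mul_cycle, Category.comp_id]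

lemma FG_t (n : ℕ) : F.map ((G0.map (t n)).unop) = (t n).op := by
  erw [G0_t, Quiver.Hom.unop_op, F_tpow, tpow_nsq]

lemma FG_s (n i : ℕ) (h : i ≤ n) : F.map ((G0.map (s n i h)).unop) = (s n i h).op := by
  erw [G0_s, Quiver.Hom.unop_op, F_d]
  rfl

lemma FG_d (n i : ℕ) (h : i ≤ n + 1) : F.map ((G0.map (d n i h)).unop) = (d n i h).op := by
  erw [G0_d, Quiver.Hom.unop_op]
  rcases Nat.lt_or_ge n i with h4 | h4
  · have hi5 : i = n + 1 := by omega
    subst hi5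
    erw [psi'_d_top n le_rfl, Functor.map_comp, Functor.map_comp, F_tpow, F_s, F_t]
    show (tpow n (n * n)).op ≫ (d n n (by omega)).op ≫ (tpow (n+1) (n+1)).op = _
    simp only [← op_comp, Category.assoc]
    congr 1
    exact key_theta_top n
  · erw [psi'_d_le n i _ h4, F_s]

theorem F_comp_G : F ⋙ G = 𝟭 CycOp := by
  apply CategoryTheory.Quotient.lift_unique' relOp
  have hobj : (Quotient.functor relOp ⋙ F ⋙ G).obj = (Quotient.functor relOp ⋙ 𝟭 CycOp).obj :=
    rfl
  apply Paths.ext_functor hobj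
  intro a b e
  show _ = 𝟙 _ ≫ _ ≫ 𝟙 _
  erw [Category.id_comp, Category.comp_id]
  change Gen a b at e
  cases e with
  | d n i h => exact GF_d _ _ h
  | s n i h => exact GF_s _ _ h
  | t n => exact GF_t _

theorem G_comp_F : G ⋙ F = 𝟭 CycOpᵒᵖ := by
  have h : (G ⋙ F).rightOp = (𝟭 CycOpᵒᵖ).rightOp := by
    apply CategoryTheory.Quotient.lift_unique' relOp
    have hobj : (Quotient.functor relOp ⋙ (G ⋙ F).rightOp).obj =
        (Quotient.functor relOp ⋙ (𝟭 CycOpᵒᵖ).rightOp).obj := rfl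
    apply Paths.ext_functor hobj
    intro a b e
    show _ = 𝟙 _ ≫ _ ≫ 𝟙 _
    erw [Category.id_comp, Category.comp_id]
    change Gen a b at e
    cases e with
    | d n i h =>
      exact congrArg Quiver.Hom.op (FG_d _ _ h)
    | s n i h =>
      exact congrArg Quiver.Hom.op (FG_s _ _ h)
    | t n =>
      exact congrArg Quiver.Hom.op (FG_t a)
  calc G ⋙ F = (G ⋙ F).rightOp.leftOp := rfl
    _ = (𝟭 CycOpᵒᵖ).rightOp.leftOp := by rw [h]
    _ = 𝟭 CycOpᵒᵖ := rfl

end CyclicOpCat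

open CyclicOpCat

/-- There is an isomorphism of categories `cΔ ≅ cΔᵒᵖ` between the cyclic category and its
opposite: there are functors `F : cΔᵒᵖ ⥤ (cΔᵒᵖ)ᵒᵖ = cΔ` and `G` inverse to each other
(composing to the identity functors on the nose). -/
theorem cyclic_iso_op :
    ∃ (F : CycOp ⥤ CycOpᵒᵖ) (G : CycOpᵒᵖ ⥤ CycOp), F ⋙ G = 𝟭 CycOp ∧ G ⋙ F = 𝟭 CycOpᵒᵖ := by
  exact ⟨CyclicOpCat.F, CyclicOpCat.G, CyclicOpCat.F_comp_G, CyclicOpCat.G_comp_F⟩
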